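/- The characteristic polynomial satisfies the symmetry f_φ(z₀, z₁, 1, 1) = f_φ(z₀, 1, z₁, z₁) for every finite-dimensional representation φ of sl(2,ℂ), where f_φ(z₀,z₁,z₂,z₃) = det(z₀I + z₁φ(h) + z₂φ(e₁) + z₃φ(e₂)). -/

import Mathlib

open Matrix Finset

section Aux

variable {R : Type*} [Ring R] [Algebra ℂ R]

/-- Truncated exponential series. -/
noncomputable def expS (A : R) (m : ℕ) : R :=
  ∑ k ∈ Finset.range m, ((k.factorial : ℂ))⁻¹ • A ^ k

lemma expS_isUnit (A : R) (m : ℕ) (hm : A ^ m = 0) : IsUnit (expS A (m + 3)) := by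
  have h1 : expS A (m + 3) =
      A * (∑ k ∈ Finset.range (m + 2), (((k + 1).factorial : ℂ))⁻¹ • A ^ k) + 1 := by
    rw [expS, Finset.sum_range_succ', Finset.mul_sum]
    simp [mul_smul_comm, ← pow_succ']
  rw [h1]
  refine IsNilpotent.isUnit_add_one ?_
  refine Commute.isNilpotent_mul_right ?_ ⟨m, hm⟩
  exact Commute.sum_right _ _ _ fun k _ => ((Commute.refl A).pow_right k).smul_right _

lemma keyk (A M D D2 : R) (hD : A * M - M * A = D) (hD2 : A * D - D * A = D2)
    (hD3 : A * D2 = D2 * A) (k : ℕ) :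
    A * (A * (A ^ k * M)) =
      M * (A * (A * A ^ k)) + ((k : ℂ) + 2) • (D * (A * A ^ k))
        + ((((k : ℂ) + 2) * ((k : ℂ) + 1)) / 2) • (D2 * A ^ k) := by
  have hAM : A * M = M * A + D := by rw [← hD]; abel
  have hAD : A * D = D * A + D2 := by rw [← hD2]; abel
  have hAM' : ∀ X : R, A * (M * X) = M * (A * X) + D * X := fun X => by
    rw [← mul_assoc, hAM, add_mul, mul_assoc]
  have hAD' : ∀ X : R, A * (D * X) = D * (A * X) + D2 * X := fun X => by
    rw [← mul_assoc, hAD, add_mul, mul_assoc]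
  have hAD2' : ∀ X : R, A * (D2 * X) = D2 * (A * X) := fun X => by
    rw [← mul_assoc, hD3, mul_assoc]
  induction k with
  | zero =>
    simp only [pow_zero, one_mul, mul_one, Nat.cast_zero]
    rw [hAM, mul_add, hAM' A, hAD]
    match_scalars <;> ring
  | succ n ih =>
    have h1 : A ^ (n + 1) * M = A * (A ^ n * M) := by rw [pow_succ', mul_assoc]
    rw [h1, ih]
    rw [mul_add, mul_add, hAM' (A * (A * A ^ n)), mul_smul_comm, hAD' (A * A ^ n),
      mul_smul_comm, hAD2' (A ^ n)]
    rw [pow_succ']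
    match_scalars <;> push_cast <;> ring

lemma conj_expS (A M D D2 : R) (hD : A * M - M * A = D) (hD2 : A * D - D * A = D2)
    (hD3 : A * D2 = D2 * A) (m : ℕ) (hm : A ^ m = 0) :
    expS A (m + 3) * M = (M + D + (2⁻¹ : ℂ) • D2) * expS A (m + 3) := by
  have hA1 : A ^ (m + 1) = 0 := by rw [pow_succ, hm, zero_mul]
  have hA2 : A ^ (m + 2) = 0 := by rw [pow_succ, hA1, zero_mul]
  have hAM : A * M = M * A + D := by rw [← hD]; abel
  have pw2 : ∀ j : ℕ, A ^ (j + 2) = A * (A * A ^ j) := fun j => by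
    rw [show j + 2 = (j + 1) + 1 from rfl, pow_succ', pow_succ']
  have pw1 : ∀ j : ℕ, A ^ (j + 1) = A * A ^ j := fun j => pow_succ' A j
  have hfacne : ∀ j : ℕ, ((j.factorial : ℂ)) ≠ 0 :=
    fun j => Nat.cast_ne_zero.mpr j.factorial_ne_zero
  have Pind : ∀ n : ℕ,
      ∑ k ∈ Finset.range (n + 2), ((k.factorial : ℂ))⁻¹ • (A ^ k * M)
        = ∑ k ∈ Finset.range (n + 2), ((k.factorial : ℂ))⁻¹ • (M * A ^ k)
          + ∑ k ∈ Finset.range (n + 1), ((k.factorial : ℂ))⁻¹ • (D * A ^ k)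
          + (2⁻¹ : ℂ) • ∑ k ∈ Finset.range n, ((k.factorial : ℂ))⁻¹ • (D2 * A ^ k) := by
    intro n
    induction n with
    | zero =>
      simp only [Finset.sum_range_succ, Finset.sum_range_zero, Finset.sum_range_one,
        pow_zero, pow_one, one_mul, mul_one, Nat.factorial_zero, Nat.factorial_one,
        Nat.cast_one, inv_one, one_smul, smul_zero, add_zero, zero_add]
      rw [hAM]
      abel
    | succ n ih =>
      rw [show n + 1 + 2 = (n + 2) + 1 from rfl,
        Finset.sum_range_succ (fun k => ((k.factorial : ℂ))⁻¹ • (A ^ k * M)) (n + 2),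
        Finset.sum_range_succ (fun k => ((k.factorial : ℂ))⁻¹ • (M * A ^ k)) (n + 2),
        Finset.sum_range_succ (fun k => ((k.factorial : ℂ))⁻¹ • (D * A ^ k)) (n + 1),
        Finset.sum_range_succ (fun k => ((k.factorial : ℂ))⁻¹ • (D2 * A ^ k)) n,
        ih]
      rw [pw2 n, pw1 n]
      rw [show A * (A * A ^ n) * M = A * (A * (A ^ n * M)) by rw [mul_assoc, mul_assoc]]
      rw [keyk A M D D2 hD hD2 hD3 n]
      have hf2 : (((n + 2).factorial : ℂ)) = ((n : ℂ) + 2) * ((n : ℂ) + 1) * (n.factorial : ℂ) := by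
        rw [show n + 2 = (n + 1) + 1 from rfl, Nat.factorial_succ, Nat.factorial_succ]
        push_cast; ring
      have hf1 : (((n + 1).factorial : ℂ)) = ((n : ℂ) + 1) * (n.factorial : ℂ) := by
        rw [Nat.factorial_succ]; push_cast; ring
      rw [smul_add, smul_add]
      have c0 : ((n.factorial : ℂ)) ≠ 0 := hfacne n
      have c1 : ((n : ℂ) + 2) ≠ 0 := by
        have := Nat.cast_ne_zero (R := ℂ).mpr (show n + 2 ≠ 0 by omega)
        push_cast at this; exact this
      have c2 : ((n : ℂ) + 1) ≠ 0 := by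
        have := Nat.cast_ne_zero (R := ℂ).mpr (show n + 1 ≠ 0 by omega)
        push_cast at this; exact this
      match_scalars <;> simp only [hf2, hf1] <;> field_simp <;> ring
  have key3 :
      ∑ k ∈ Finset.range (m + 3), ((k.factorial : ℂ))⁻¹ • (A ^ k * M)
        = ∑ k ∈ Finset.range (m + 3), ((k.factorial : ℂ))⁻¹ • (M * A ^ k)
          + ∑ k ∈ Finset.range (m + 2), ((k.factorial : ℂ))⁻¹ • (D * A ^ k)
          + (2⁻¹ : ℂ) • ∑ k ∈ Finset.range (m + 1), ((k.factorial : ℂ))⁻¹ • (D2 * A ^ k) :=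
    Pind (m + 1)
  have e1 : expS A (m + 3) * M
      = ∑ k ∈ Finset.range (m + 3), ((k.factorial : ℂ))⁻¹ • (A ^ k * M) := by
    rw [expS, Finset.sum_mul]
    simp only [smul_mul_assoc]
  have e2 : M * expS A (m + 3)
      = ∑ k ∈ Finset.range (m + 3), ((k.factorial : ℂ))⁻¹ • (M * A ^ k) := by
    rw [expS, Finset.mul_sum]
    simp only [mul_smul_comm]
  have e3 : D * expS A (m + 3)
      = ∑ k ∈ Finset.range (m + 2), ((k.factorial : ℂ))⁻¹ • (D * A ^ k) := by
    rw [expS, Finset.mul_sum]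
    simp only [mul_smul_comm]
    rw [show m + 3 = (m + 2) + 1 from rfl,
      Finset.sum_range_succ (fun k => ((k.factorial : ℂ))⁻¹ • (D * A ^ k)) (m + 2), hA2]
    simp
  have e4 : D2 * expS A (m + 3)
      = ∑ k ∈ Finset.range (m + 1), ((k.factorial : ℂ))⁻¹ • (D2 * A ^ k) := by
    rw [expS, Finset.mul_sum]
    simp only [mul_smul_comm]
    rw [show m + 3 = (m + 2) + 1 from rfl,
      Finset.sum_range_succ (fun k => ((k.factorial : ℂ))⁻¹ • (D2 * A ^ k)) (m + 2), hA2,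
      show m + 2 = (m + 1) + 1 from rfl,
      Finset.sum_range_succ (fun k => ((k.factorial : ℂ))⁻¹ • (D2 * A ^ k)) (m + 1), hA1]
    simp
  rw [e1, key3, add_mul, add_mul, smul_mul_assoc, e2, e3, e4]

end Aux

/-- An operator satisfying `[H,A] = μ A` with `μ ≠ 0` in finite dimensions is nilpotent. -/
lemma nilp_of_eigen {N : ℕ} (H A : Matrix (Fin N) (Fin N) ℂ) (μ : ℂ) (hμ : μ ≠ 0)
    (h : H * A - A * H = μ • A) : ∃ m, A ^ m = 0 := by
  by_contra hc
  push_neg at hc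
  have hHA : H * A = A * H + μ • A := by rw [← h]; abel
  set f : Module.End ℂ (Matrix (Fin N) (Fin N) ℂ) :=
    LinearMap.mulLeft ℂ H - LinearMap.mulRight ℂ H with hf
  have key : ∀ k : ℕ, H * A ^ k - A ^ k * H = ((k : ℂ) * μ) • A ^ k := by
    intro k
    induction k with
    | zero => simp
    | succ n ih =>
      have ihe : H * A ^ n = A ^ n * H + ((n : ℂ) * μ) • A ^ n := by rw [← ih]; abel
      rw [pow_succ, ← mul_assoc, ihe, add_mul, smul_mul_assoc, mul_assoc, hHA, mul_add,
        mul_smul_comm, ← mul_assoc]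
      match_scalars <;> push_cast <;> ring
  have eig : ∀ k : ℕ, f.HasEigenvector ((k : ℂ) * μ) (A ^ k) := by
    intro k
    constructor
    · rw [Module.End.mem_eigenspace_iff]
      show (LinearMap.mulLeft ℂ H - LinearMap.mulRight ℂ H) (A ^ k) = _
      simp only [LinearMap.sub_apply, LinearMap.mulLeft_apply, LinearMap.mulRight_apply]
      rw [key k]
    · exact hc k
  have li := f.eigenvectors_linearIndependent' (fun k : ℕ => (k : ℂ) * μ)
    (fun j k hjk => by
      have h2 : ((j : ℕ) : ℂ) = ((k : ℕ) : ℂ) := mul_right_cancel₀ hμ hjk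
      exact_mod_cast h2)
    _ eig
  exact Module.Finite.not_linearIndependent_of_infinite _ li

theorem char_poly_symmetry (N : ℕ) (H E F : Matrix (Fin N) (Fin N) ℂ)
    (hEF : E * F - F * E = H)
    (hHE : H * E - E * H = (2 : ℂ) • E)
    (hHF : H * F - F * H = (-2 : ℂ) • F)
    (z₀ z₁ : ℂ) :
    (z₀ • (1 : Matrix (Fin N) (Fin N) ℂ) + z₁ • H + E + F).det
      = (z₀ • (1 : Matrix (Fin N) (Fin N) ℂ) + H + z₁ • E + z₁ • F).det := by
  classical
  obtain ⟨mE, hmE⟩ := nilp_of_eigen H E 2 two_ne_zero hHE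
  obtain ⟨mF, hmF⟩ := nilp_of_eigen H F (-2) (by norm_num) hHF
  have hEH : E * H = H * E - (2 : ℂ) • E := by rw [← hHE]; abel
  have hFE : F * E = E * F - H := by rw [← hEF]; abel
  have hFH : F * H = H * F - (-2 : ℂ) • F := by rw [← hHF]; abel
  -- determinant invariance under intertwining by a unit
  have detstep : ∀ P X Y : Matrix (Fin N) (Fin N) ℂ, IsUnit P → P * X = Y * P →
      X.det = Y.det := by
    intro P X Y hP h
    have h' := congrArg Matrix.det h
    rw [Matrix.det_mul, Matrix.det_mul] at h'
    have hd : IsUnit P.det := (Matrix.isUnit_iff_isUnit_det P).mp hP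
    exact mul_left_cancel₀ hd.ne_zero (by rw [h', mul_comm])
  -- conjugation by exp(s E)
  have stageE : ∀ x y z s : ℂ, ∃ P : Matrix (Fin N) (Fin N) ℂ, IsUnit P ∧
      P * (z₀ • 1 + x • H + y • E + z • F)
        = (z₀ • 1 + (x + s * z) • H + (y - 2 * s * x - s ^ 2 * z) • E + z • F) * P := by
    intro x y z s
    have hnil : (s • E) ^ mE = 0 := by rw [smul_pow, hmE, smul_zero]
    refine ⟨expS (s • E) (mE + 3), expS_isUnit _ _ hnil, ?_⟩
    have hD : (s • E) * (z₀ • 1 + x • H + y • E + z • F)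
        - (z₀ • 1 + x • H + y • E + z • F) * (s • E)
        = (s * z) • H + (-(2 * s * x)) • E := by
      simp only [mul_add, add_mul, smul_mul_assoc, mul_smul_comm, mul_one, one_mul, smul_smul]
      rw [hEH, hFE]
      match_scalars <;> ring
    have hD2 : (s • E) * ((s * z) • H + (-(2 * s * x)) • E)
        - ((s * z) • H + (-(2 * s * x)) • E) * (s • E)
        = (-(2 * s ^ 2 * z)) • E := by
      simp only [mul_add, add_mul, smul_mul_assoc, mul_smul_comm, smul_smul]
      rw [hEH]
      match_scalars <;> ring
    have hD3 : (s • E) * ((-(2 * s ^ 2 * z)) • E) = ((-(2 * s ^ 2 * z)) • E) * (s • E) := by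
      simp only [smul_mul_assoc, mul_smul_comm, smul_smul]
      match_scalars <;> ring
    rw [conj_expS (s • E) _ _ _ hD hD2 hD3 mE hnil]
    congr 1
    match_scalars <;> ring
  -- conjugation by exp(s F)
  have stageF : ∀ x y z s : ℂ, ∃ P : Matrix (Fin N) (Fin N) ℂ, IsUnit P ∧
      P * (z₀ • 1 + x • H + y • E + z • F)
        = (z₀ • 1 + (x - s * y) • H + y • E + (z + 2 * s * x - s ^ 2 * y) • F) * P := by
    intro x y z s
    have hnil : (s • F) ^ mF = 0 := by rw [smul_pow, hmF, smul_zero]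
    refine ⟨expS (s • F) (mF + 3), expS_isUnit _ _ hnil, ?_⟩
    have hD : (s • F) * (z₀ • 1 + x • H + y • E + z • F)
        - (z₀ • 1 + x • H + y • E + z • F) * (s • F)
        = (-(s * y)) • H + (2 * s * x) • F := by
      simp only [mul_add, add_mul, smul_mul_assoc, mul_smul_comm, mul_one, one_mul, smul_smul]
      rw [hFH, hFE]
      match_scalars <;> ring
    have hD2 : (s • F) * ((-(s * y)) • H + (2 * s * x) • F)
        - ((-(s * y)) • H + (2 * s * x) • F) * (s • F)
        = (-(2 * s ^ 2 * y)) • F := by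
      simp only [mul_add, add_mul, smul_mul_assoc, mul_smul_comm, smul_smul]
      rw [hFH]
      match_scalars <;> ring
    have hD3 : (s • F) * ((-(2 * s ^ 2 * y)) • F) = ((-(2 * s ^ 2 * y)) • F) * (s • F) := by
      simp only [smul_mul_assoc, mul_smul_comm, smul_smul]
      match_scalars <;> ring
    rw [conj_expS (s • F) _ _ _ hD hD2 hD3 mF hnil]
    congr 1
    match_scalars <;> ring
  -- the special scalar λ with λ² = -1/2
  set lam : ℂ := Complex.I / ((Real.sqrt 2 : ℝ) : ℂ) with hlamdef
  have hs2 : ((Real.sqrt 2 : ℝ) : ℂ) ^ 2 = 2 := by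
    rw [← Complex.ofReal_pow, Real.sq_sqrt (by norm_num : (0:ℝ) ≤ 2)]
    norm_num
  have hlam : lam ^ 2 = -(1 / 2) := by
    rw [hlamdef, div_pow, Complex.I_sq, hs2]
    norm_num
  -- chain of three conjugations
  obtain ⟨P₁, hu₁, h₁⟩ := stageE z₁ 1 1 (2 * lam - 1)
  obtain ⟨P₂, hu₂, h₂⟩ := stageF (z₁ + (2 * lam - 1) * 1)
    (1 - 2 * (2 * lam - 1) * z₁ - (2 * lam - 1) ^ 2 * 1) 1 lam
  obtain ⟨P₃, hu₃, h₃⟩ := stageE ((z₁ + (2 * lam - 1) * 1) - lam * (1 - 2 * (2 * lam - 1) * z₁ - (2 * lam - 1) ^ 2 * 1))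
    (1 - 2 * (2 * lam - 1) * z₁ - (2 * lam - 1) ^ 2 * 1)
    (1 + 2 * lam * (z₁ + (2 * lam - 1) * 1) - lam ^ 2 * (1 - 2 * (2 * lam - 1) * z₁ - (2 * lam - 1) ^ 2 * 1))
    (1 + 2 * lam)
  have d1 := detstep _ _ _ hu₁ h₁
  have d2 := detstep _ _ _ hu₂ h₂
  have d3 := detstep _ _ _ hu₃ h₃
  have hX0 : z₀ • (1 : Matrix (Fin N) (Fin N) ℂ) + z₁ • H + E + F
      = z₀ • 1 + z₁ • H + (1 : ℂ) • E + (1 : ℂ) • F := by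
    match_scalars <;> ring
  have hX3 : z₀ • (1 : Matrix (Fin N) (Fin N) ℂ)
      + (((z₁ + (2 * lam - 1) * 1) - lam * (1 - 2 * (2 * lam - 1) * z₁ - (2 * lam - 1) ^ 2 * 1))
          + (1 + 2 * lam) * (1 + 2 * lam * (z₁ + (2 * lam - 1) * 1) - lam ^ 2 * (1 - 2 * (2 * lam - 1) * z₁ - (2 * lam - 1) ^ 2 * 1))) • H
      + ((1 - 2 * (2 * lam - 1) * z₁ - (2 * lam - 1) ^ 2 * 1)
          - 2 * (1 + 2 * lam) * ((z₁ + (2 * lam - 1) * 1) - lam * (1 - 2 * (2 * lam - 1) * z₁ - (2 * lam - 1) ^ 2 * 1))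
          - (1 + 2 * lam) ^ 2 * (1 + 2 * lam * (z₁ + (2 * lam - 1) * 1) - lam ^ 2 * (1 - 2 * (2 * lam - 1) * z₁ - (2 * lam - 1) ^ 2 * 1))) • E
      + (1 + 2 * lam * (z₁ + (2 * lam - 1) * 1) - lam ^ 2 * (1 - 2 * (2 * lam - 1) * z₁ - (2 * lam - 1) ^ 2 * 1)) • F
      = z₀ • 1 + H + z₁ • E + z₁ • F := by
    match_scalars
    · ring
    · linear_combination (8 * lam ^ 3 - 4 * lam ^ 2 + 8 * lam ^ 2 * z₁ + 4 * lam + 2 * z₁ - 2) * hlam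
    · linear_combination (-16 * lam ^ 4 - 16 * lam ^ 3 * z₁ - 12 * lam ^ 2 - 8 * lam ^ 2 * z₁ + 4 * lam - 12 * lam * z₁ + 2 - 2 * z₁) * hlam
    · linear_combination (4 * lam ^ 2 + 4 * lam * z₁ - 4 * lam + 2 - 2 * z₁) * hlam
  rw [hX0, d1, d2, d3, hX3]
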